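/- Let K be a field, S a finite-dimensional K-algebra, and M a finite-dimensional S-S-bimodule. Let D(M) = Hom_K(M,K) be the dual S-S-bimodule, with actions (s·φ)(m) = φ(ms) and (φ·s)(m) = φ(sm) for s ∈ S, m ∈ M, φ ∈ D(M). Then there is a K-algebra isomorphism T(S ⋉ M) ≅ T(S ⋉ D(M)) between the trivial extensions of the algebras S ⋉ M and S ⋉ D(M). -/
import Mathlib


open MulOpposite

section DualBimodule

variable (K : Type*) [Field K] (S : Type*) [Ring S] [Algebra K S]
variable (M : Type*) [AddCommGroup M] [Module K M] [Module S M] [Module Sᵐᵒᵖ M]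
  [SMulCommClass S Sᵐᵒᵖ M] [IsScalarTower K S M] [IsScalarTower K Sᵐᵒᵖ M]

/-- Right action of `s : S` on `M`, as a `K`-linear endomorphism. -/
noncomputable def rAct (s : S) : M →ₗ[K] M where
  toFun m := op s • m
  map_add' _ _ := smul_add _ _ _
  map_smul' k m := (smul_comm (op s) k m)

/-- Left action of `s : S` on `M`, as a `K`-linear endomorphism. -/
noncomputable def lAct (s : S) : M →ₗ[K] M where
  toFun m := s • m
  map_add' _ _ := smul_add _ _ _
  map_smul' k m := (smul_comm s k m)

/-- The left `S`-module structure on the dual `Hom_K(M, K)`: `(s • φ) m = φ (m • s)`. -/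
noncomputable instance dualModuleLeft : Module S (M →ₗ[K] K) where
  smul s φ := φ ∘ₗ rAct K S M s
  one_smul φ := LinearMap.ext fun m => by
    show φ (op (1 : S) • m) = φ m
    rw [op_one, one_smul]
  mul_smul s t φ := LinearMap.ext fun m => by
    show φ (op (s * t) • m) = φ (op t • op s • m)
    rw [op_mul, mul_smul]
  smul_zero s := rfl
  smul_add s φ ψ := rfl
  add_smul s t φ := LinearMap.ext fun m => by
    show φ (op (s + t) • m) = φ (op s • m) + φ (op t • m)
    rw [op_add, add_smul, map_add]
  zero_smul φ := LinearMap.ext fun m => by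
    show φ (op (0 : S) • m) = 0
    rw [op_zero, zero_smul, map_zero]

/-- The right `S`-module structure on the dual `Hom_K(M, K)`: `(φ • s) m = φ (s • m)`. -/
noncomputable instance dualModuleRight : Module Sᵐᵒᵖ (M →ₗ[K] K) where
  smul s φ := φ ∘ₗ lAct K S M s.unop
  one_smul φ := LinearMap.ext fun m => by
    show φ ((1 : Sᵐᵒᵖ).unop • m) = φ m
    rw [unop_one, one_smul]
  mul_smul s t φ := LinearMap.ext fun m => by
    show φ ((s * t).unop • m) = φ (t.unop • s.unop • m)
    rw [unop_mul, mul_smul]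
  smul_zero s := rfl
  smul_add s φ ψ := rfl
  add_smul s t φ := LinearMap.ext fun m => by
    show φ ((s + t).unop • m) = φ (s.unop • m) + φ (t.unop • m)
    rw [unop_add, add_smul, map_add]
  zero_smul φ := LinearMap.ext fun m => by
    show φ ((0 : Sᵐᵒᵖ).unop • m) = 0
    rw [unop_zero, zero_smul, map_zero]

noncomputable instance dualSMulCommClass : SMulCommClass S Sᵐᵒᵖ (M →ₗ[K] K) where
  smul_comm s t φ := LinearMap.ext fun m => by
    show φ (t.unop • op s • m) = φ (op s • t.unop • m)
    rw [smul_comm]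

noncomputable instance dualIsScalarTowerLeft : IsScalarTower K S (M →ₗ[K] K) where
  smul_assoc k s φ := LinearMap.ext fun m => by
    show φ (op (k • s) • m) = k • φ (op s • m)
    rw [op_smul, smul_assoc, map_smul]

noncomputable instance dualIsScalarTowerRight : IsScalarTower K Sᵐᵒᵖ (M →ₗ[K] K) where
  smul_assoc k t φ := LinearMap.ext fun m => by
    show φ ((k • t).unop • m) = k • φ (t.unop • m)
    rw [unop_smul, smul_assoc, map_smul]

end DualBimodule


section Aux
set_option linter.unusedSectionVars false

variable (K : Type*) [Field K] (S : Type*) [Ring S] [Algebra K S]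
variable (M : Type*) [AddCommGroup M] [Module K M] [Module S M] [Module Sᵐᵒᵖ M]
  [SMulCommClass S Sᵐᵒᵖ M] [IsScalarTower K S M] [IsScalarTower K Sᵐᵒᵖ M]

open TrivSqZeroExt

theorem dual_smul_apply (s : S) (φ : M →ₗ[K] K) (m : M) : (s • φ) m = φ (op s • m) := rfl

theorem dual_op_smul_apply (s : Sᵐᵒᵖ) (φ : M →ₗ[K] K) (m : M) : (s • φ) m = φ (s.unop • m) := rfl

theorem inr_mul' (a : TrivSqZeroExt S M) (n : M) :
    (inr n : TrivSqZeroExt S M) * a = inr (op a.fst • n) := by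
  refine TrivSqZeroExt.ext ?_ ?_ <;> simp

theorem mul_inr' (a : TrivSqZeroExt S M) (n : M) :
    a * (inr n : TrivSqZeroExt S M) = inr (a.fst • n) := by
  refine TrivSqZeroExt.ext ?_ ?_ <;> simp

theorem inl_mul'' (t : S) (a : TrivSqZeroExt S M) :
    (inl t : TrivSqZeroExt S M) * a = inl (t * a.fst) + inr (t • a.snd) := by
  refine TrivSqZeroExt.ext ?_ ?_ <;> simp

theorem mul_inl'' (t : S) (a : TrivSqZeroExt S M) :
    a * (inl t : TrivSqZeroExt S M) = inl (a.fst * t) + inr (op t • a.snd) := by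
  refine TrivSqZeroExt.ext ?_ ?_ <;> simp

/-- `inr` as a `K`-linear map. -/
noncomputable def inrK : M →ₗ[K] TrivSqZeroExt S M where
  toFun := inr
  map_add' := inr_add S
  map_smul' k m := by refine TrivSqZeroExt.ext ?_ ?_ <;> simp

@[simp] theorem inrK_apply (m : M) : inrK K S M m = inr m := rfl

theorem dual_apply_decomp (f : TrivSqZeroExt S M →ₗ[K] K) (z : TrivSqZeroExt S M) :
    f z = f (inl z.fst) + f (inr z.snd) := by
  rw [← map_add, inl_fst_add_inr_snd_eq]

/-- The second component of the forward map. -/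
noncomputable def Gmap (m : M) (f : TrivSqZeroExt S M →ₗ[K] K) :
    TrivSqZeroExt S (M →ₗ[K] K) →ₗ[K] K where
  toFun y := f (inl y.fst) + y.snd m
  map_add' y z := by
    simp only [fst_add, snd_add, inl_add, map_add, LinearMap.add_apply]; abel
  map_smul' k y := by
    simp only [fst_smul, snd_smul, RingHom.id_apply, inl_smul, map_smul,
      LinearMap.smul_apply, smul_add]

@[simp] theorem Gmap_apply (m : M) (f : TrivSqZeroExt S M →ₗ[K] K)
    (y : TrivSqZeroExt S (M →ₗ[K] K)) : Gmap K S M m f y = f (inl y.fst) + y.snd m := rfl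

/-- The second component of the inverse map. -/
noncomputable def Hmap (φ : M →ₗ[K] K) (F : TrivSqZeroExt S (M →ₗ[K] K) →ₗ[K] K) :
    TrivSqZeroExt S M →ₗ[K] K where
  toFun z := F (inl z.fst) + φ z.snd
  map_add' y z := by
    simp only [fst_add, snd_add, inl_add, map_add]; abel
  map_smul' k y := by
    simp only [fst_smul, snd_smul, RingHom.id_apply, inl_smul, map_smul, smul_add]

@[simp] theorem Hmap_apply (φ : M →ₗ[K] K) (F : TrivSqZeroExt S (M →ₗ[K] K) →ₗ[K] K)
    (z : TrivSqZeroExt S M) : Hmap K S M φ F z = F (inl z.fst) + φ z.snd := rfl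

set_option synthInstance.maxHeartbeats 1000000 in
set_option maxHeartbeats 4000000 in
/-- The `K`-algebra isomorphism `T(S ⋉ M) ≃ T(S ⋉ D(M))`. -/
noncomputable def bigEquiv [FiniteDimensional K M] :
    (TrivSqZeroExt (TrivSqZeroExt S M) (TrivSqZeroExt S M →ₗ[K] K)) ≃ₐ[K]
    (TrivSqZeroExt (TrivSqZeroExt S (M →ₗ[K] K))
      (TrivSqZeroExt S (M →ₗ[K] K) →ₗ[K] K)) where
  toFun x := inl (inl x.fst.fst + inr (x.snd ∘ₗ inrK K S M)) +
    inr (Gmap K S M x.fst.snd x.snd)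
  invFun y := inl (inl y.fst.fst +
      inr ((Module.evalEquiv K M).symm (y.snd ∘ₗ inrK K S (M →ₗ[K] K)))) +
    inr (Hmap K S M y.fst.snd y.snd)
  left_inv x := by
    refine TrivSqZeroExt.ext ?_ ?_
    · simp only [fst_add, fst_inl, fst_inr, snd_add, snd_inl, snd_inr, add_zero, zero_add]
      refine TrivSqZeroExt.ext ?_ ?_
      · simp
      · simp only [snd_add, snd_inl, snd_inr, zero_add]
        rw [LinearEquiv.symm_apply_eq]
        ext φ
        simp
    · simp only [snd_add, snd_inl, snd_inr, zero_add]
      ext z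
      simp only [Hmap_apply, Gmap_apply, LinearMap.comp_apply, inrK_apply, fst_inl, snd_inl,
        fst_inr, snd_inr, fst_add, snd_add, add_zero, zero_add,
        map_zero, LinearMap.zero_apply]
      rw [← map_add, inl_fst_add_inr_snd_eq]
  right_inv y := by
    refine TrivSqZeroExt.ext ?_ ?_
    · simp only [fst_add, fst_inl, fst_inr, snd_add, snd_inl, snd_inr, add_zero, zero_add]
      refine TrivSqZeroExt.ext ?_ ?_
      · simp
      · simp only [snd_add, snd_inl, snd_inr, zero_add]
        ext n
        simp
    · simp only [snd_add, snd_inl, snd_inr, zero_add]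
      ext z
      simp only [Gmap_apply, Hmap_apply, LinearMap.comp_apply, inrK_apply, fst_inl, snd_inl,
        fst_inr, snd_inr, fst_add, snd_add, add_zero, zero_add,
        map_zero, LinearMap.zero_apply, Module.apply_evalEquiv_symm_apply]
      rw [← map_add, inl_fst_add_inr_snd_eq]
  map_mul' x y := by
    refine TrivSqZeroExt.ext ?_ ?_
    · rw [fst_mul]
      simp only [fst_add, fst_inl, fst_inr, snd_add, snd_inl, snd_inr, add_zero, zero_add]
      refine TrivSqZeroExt.ext ?_ ?_
      · simp
      · ext n
        simp only [snd_mul, fst_mul, LinearMap.comp_apply, inrK_apply, LinearMap.add_apply,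
          dual_smul_apply, dual_op_smul_apply, unop_op, op_smul_eq_mul, smul_eq_mul,
          inr_mul', mul_inr', fst_add, snd_add, fst_inl, snd_inl, fst_inr, snd_inr,
          add_zero, zero_add, inl_zero, inr_zero, map_zero]
    · rw [snd_mul]
      ext z
      simp only [LinearMap.add_apply, dual_smul_apply, dual_op_smul_apply, unop_op,
        op_smul_eq_mul, smul_eq_mul, Gmap_apply, fst_mul, snd_mul, fst_add, snd_add,
        fst_inl, snd_inl, fst_inr, snd_inr, add_mul, mul_add, inl_mul'', mul_inl'',
        inr_mul', mul_inr', inr_mul_inr, LinearMap.comp_apply, inrK_apply, map_add,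
        add_zero, zero_add, mul_zero, zero_mul, LinearMap.zero_apply, map_zero,
        inl_zero, inr_zero]
      abel
  map_add' x y := by
    refine TrivSqZeroExt.ext ?_ ?_
    · simp only [fst_add, snd_add, fst_inl, fst_inr, LinearMap.add_comp, inl_add, inr_add,
        add_zero, zero_add]
      refine TrivSqZeroExt.ext ?_ ?_ <;> simp <;> abel
    · ext z
      simp only [snd_add, fst_add, snd_inl, snd_inr, Gmap_apply, LinearMap.add_apply,
        map_add, inl_add, zero_add]
      abel
  commutes' k := by
    refine TrivSqZeroExt.ext ?_ ?_
    · refine TrivSqZeroExt.ext ?_ ?_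
      · simp [algebraMap_eq_inl']
      · ext n; simp [algebraMap_eq_inl']
    · ext z; simp [algebraMap_eq_inl']

end Aux



/-- Let `S` be a finite-dimensional `K`-algebra and `M` a finite-dimensional
`S`-`S`-bimodule, with `K`-dual bimodule `D(M) = Hom_K(M, K)` (where `(s • φ) m = φ (m • s)`
and `(φ • s) m = φ (s • m)`).  Then the trivial extensions `T(S ⋉ M)` and `T(S ⋉ D(M))` are
isomorphic as `K`-algebras. -/
theorem trivialExtension_trivSqZeroExt_algEquiv_trivialExtension_dual
    (K : Type*) [Field K] (S : Type*) [Ring S] [Algebra K S]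
    (M : Type*) [AddCommGroup M] [Module K M] [Module S M] [Module Sᵐᵒᵖ M]
    [SMulCommClass S Sᵐᵒᵖ M] [IsScalarTower K S M] [IsScalarTower K Sᵐᵒᵖ M]
    [FiniteDimensional K S] [FiniteDimensional K M] :
    Nonempty
      ((TrivSqZeroExt (TrivSqZeroExt S M) (TrivSqZeroExt S M →ₗ[K] K)) ≃ₐ[K]
       (TrivSqZeroExt (TrivSqZeroExt S (M →ₗ[K] K))
          (TrivSqZeroExt S (M →ₗ[K] K) →ₗ[K] K))) := by
  exact ⟨bigEquiv K S M⟩
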